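/- Let n be a nonzero integer and let v ∈ 𝓕 be a basis vector given by a semi-infinite monomial. Then ψ(j+n)∘ψ*(j)(v) = 0 for all but finitely many integers j; consequently the formula p(n)(v) = Σ_{j∈ℤ} ψ(j+n)ψ*(j)(v) defines a ℂ-linear operator p(n) : 𝓕 → 𝓕. -/

import Mathlib

open scoped Classical

/-- A semi-infinite monomial: a strictly decreasing sequence `i : ℕ → ℤ`
(written `i₀ > i₁ > i₂ > ⋯`) such that `i n = m - n` for all sufficiently
large `n`, for some integer `m` (the charge). -/
structure SIM : Type where
  seq : ℕ → ℤ
  strictAnti : StrictAnti seq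
  charge_exists : ∃ m : ℤ, ∃ N : ℕ, ∀ n ≥ N, seq n = m - n

namespace SIM

/-- `v` has charge `m` if `v n = m - n` for all sufficiently large `n`. -/
def HasCharge (v : SIM) (m : ℤ) : Prop :=
  ∃ N : ℕ, ∀ n ≥ N, v.seq n = m - n

/-- The charge of a semi-infinite monomial. -/
noncomputable def charge (v : SIM) : ℤ := v.charge_exists.choose

theorem exists_seq_lt (v : SIM) (k : ℤ) : ∃ n, v.seq n < k := by
  obtain ⟨m, N, hN⟩ := v.charge_exists
  refine ⟨max N (m - k + 1).toNat, ?_⟩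
  rw [hN _ (le_max_left _ _)]
  have h1 : (m - k + 1).toNat ≤ max N (m - k + 1).toNat := le_max_right _ _
  omega

/-- The position at which `k` is inserted into `v`: the number of entries of `v`
that are greater than `k` (assuming `k` does not occur in `v`). -/
noncomputable def insIdx (v : SIM) (k : ℤ) : ℕ := sInf {n : ℕ | v.seq n < k}

/-- The monomial obtained from `v` by inserting the entry `k`
(meaningful when `k` does not occur among the entries of `v`; in the unused
case where `k` does occur we simply return `v`). -/
noncomputable def insert (v : SIM) (k : ℤ) : SIM :=
  if h : k ∈ Set.range v.seq then v
  else
    { seq := fun n =>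
        if n < v.insIdx k then v.seq n else if n = v.insIdx k then k else v.seq (n - 1)
      strictAnti := by
        have hs : v.seq (v.insIdx k) < k := Nat.sInf_mem (v.exists_seq_lt k)
        have hgt : ∀ n, n < v.insIdx k → k < v.seq n := by
          intro n hn
          have h1 : ¬ v.seq n < k := Nat.notMem_of_lt_sInf hn
          have h2 : v.seq n ≠ k := fun hh => h ⟨n, hh⟩
          omega
        apply strictAnti_nat_of_succ_lt
        intro n

        rcases lt_trichotomy (n + 1) (v.insIdx k) with h1 | h1 | h1
        · rw [if_pos h1, if_pos (by omega)]
          exact v.strictAnti (Nat.lt_succ_self n)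
        · rw [if_neg (by omega), if_pos h1, if_pos (by omega)]
          exact hgt n (by omega)
        · rw [if_neg (by omega), if_neg (by omega)]
          rcases eq_or_lt_of_le (Nat.le_of_lt_succ h1) with h2 | h2
          · rw [if_neg (by omega), if_pos h2.symm]
            simpa [← h2] using hs
          · rw [if_neg (by omega), if_neg (by omega)]
            exact v.strictAnti (by omega)
      charge_exists := by
        obtain ⟨m, N, hN⟩ := v.charge_exists
        refine ⟨m + 1, max N (v.insIdx k) + 1, fun n hn => ?_⟩

        beta_reduce
        rw [if_neg (by omega), if_neg (by omega), hN (n - 1) (by omega)]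
        omega }

/-- The position of the entry `k` in `v` (assuming `k` occurs in `v`). -/
noncomputable def delIdx (v : SIM) (k : ℤ) : ℕ := sInf {n : ℕ | v.seq n ≤ k}

/-- The monomial obtained from `v` by deleting the entry `k`
(meaningful when `k` occurs among the entries of `v`). -/
noncomputable def delete (v : SIM) (k : ℤ) : SIM where
  seq n := if n < v.delIdx k then v.seq n else v.seq (n + 1)
  strictAnti := by
    apply strictAnti_nat_of_succ_lt
    intro n

    split_ifs <;> exact v.strictAnti (by omega)
  charge_exists := by
    obtain ⟨m, N, hN⟩ := v.charge_exists
    refine ⟨m - 1, max N (v.delIdx k), fun n hn => ?_⟩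

    beta_reduce
    rw [if_neg (by omega), hN (n + 1) (by omega)]
    omega

end SIM

/-- The fermionic Fock space: the free ℂ-vector space on the set of all
semi-infinite monomials (of all charges). -/
abbrev Fock : Type := SIM →₀ ℂ

/-- The wedging operator `ψ(k)`: it sends a basis monomial `i₀ > i₁ > ⋯` to `0`
if `k = i_s` for some `s`, and otherwise to `(−1)^s` times the basis monomial
obtained by inserting `k`, where `s` is the number of entries greater
than `k`. -/
noncomputable def psi (k : ℤ) : Fock →ₗ[ℂ] Fock :=
  Finsupp.lsum ℂ fun v =>
    if k ∈ Set.range v.seq then 0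
    else ((-1 : ℂ) ^ v.insIdx k) • Finsupp.lsingle (v.insert k)

/-- The contracting operator `ψ*(k)`: it sends a basis monomial `i₀ > i₁ > ⋯`
to `(−1)^s` times the basis monomial obtained by deleting `i_s` if `k = i_s`,
and to `0` if `k` does not occur among the entries. -/
noncomputable def psiStar (k : ℤ) : Fock →ₗ[ℂ] Fock :=
  Finsupp.lsum ℂ fun v =>
    if k ∈ Set.range v.seq then ((-1 : ℂ) ^ v.delIdx k) • Finsupp.lsingle (v.delete k)
    else 0

lemma psiStar_single (j : ℤ) (v : SIM) :
    psiStar j (Finsupp.single v 1) =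
      if j ∈ Set.range v.seq then
        ((-1 : ℂ) ^ v.delIdx j) • Finsupp.single (v.delete j) 1 else 0 := by
  rw [psiStar, Finsupp.lsum_single]
  split_ifs <;> simp

lemma psi_single (k : ℤ) (v : SIM) :
    psi k (Finsupp.single v 1) =
      if k ∈ Set.range v.seq then 0
      else ((-1 : ℂ) ^ v.insIdx k) • Finsupp.single (v.insert k) 1 := by
  rw [psi, Finsupp.lsum_single]
  split_ifs <;> simp

lemma SIM.seq_delIdx (v : SIM) {j : ℤ} (h : j ∈ Set.range v.seq) :
    v.seq (v.delIdx j) = j := by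
  obtain ⟨i, hi⟩ := h
  have hne : i ∈ {n : ℕ | v.seq n ≤ j} := by simp [hi]
  have h1 : v.delIdx j ≤ i := Nat.sInf_le hne
  have h2 : v.seq (v.delIdx j) ≤ j := Nat.sInf_mem ⟨i, hne⟩
  rcases eq_or_lt_of_le h1 with h3 | h3
  · rw [h3, hi]
  · exact absurd (hi ▸ v.strictAnti h3) (by omega)

lemma SIM.mem_range_delete (v : SIM) {j k : ℤ} (hj : j ∈ Set.range v.seq)
    (hk : k ∈ Set.range v.seq) (hne : k ≠ j) : k ∈ Set.range (v.delete j).seq := by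
  obtain ⟨i, hi⟩ := hk
  have hd := v.seq_delIdx hj
  have hid : i ≠ v.delIdx j := fun h => hne (by rw [← hi, h, hd])
  rcases lt_or_gt_of_ne hid with h | h
  · exact ⟨i, by simp [SIM.delete, h, hi]⟩
  · refine ⟨i - 1, ?_⟩
    simp only [SIM.delete]
    rw [if_neg (by omega)]
    rw [Nat.sub_add_cancel (by omega), hi]

lemma seq_le (v : SIM) : ∀ k : ℕ, v.seq k ≤ v.seq 0 - k := by
  intro k
  induction k with
  | zero => simp
  | succ k ih =>
    have := v.strictAnti (show k < k+1 by omega)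
    push_cast
    push_cast at ih
    omega

/-- For a nonzero integer `n` and a basis vector `v` of `𝓕`,
`ψ(j+n)∘ψ*(j)(v) = 0` for all but finitely many integers `j`; consequently the
formula `p(n)(v) = Σ_{j∈ℤ} ψ(j+n)ψ*(j)(v)` defines a (unique) ℂ-linear operator
on `𝓕`. -/
theorem heisenberg_operator_well_defined (n : ℤ) (hn : n ≠ 0) (v : SIM) :
    {j : ℤ | psi (j + n) (psiStar j (Finsupp.single v 1)) ≠ 0}.Finite ∧
    ∃! P : Fock →ₗ[ℂ] Fock, ∀ w : SIM,
      P (Finsupp.single w 1) =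
        ∑ᶠ j : ℤ, psi (j + n) (psiStar j (Finsupp.single w 1)) := by
  constructor
  · obtain ⟨m, N, hN⟩ := v.charge_exists
    set B : ℤ := m - n - N with hB
    have hsub : {j : ℤ | psi (j + n) (psiStar j (Finsupp.single v 1)) ≠ 0} ⊆
        v.seq '' (Set.Iio (v.seq 0 - B).toNat) := by
      intro j hj
      simp only [Set.mem_setOf_eq] at hj
      by_cases hjr : j ∈ Set.range v.seq
      · by_cases hjB : B < j
        · obtain ⟨i, hi⟩ := hjr
          refine ⟨i, ?_, hi⟩
          have := seq_le v i
          simp only [Set.mem_Iio]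
          omega
        · exfalso
          apply hj
          rw [psiStar_single, if_pos hjr, map_smul, psi_single]
          have hmem : j + n ∈ Set.range (v.delete j).seq := by
            apply v.mem_range_delete hjr _ (by omega)
            exact ⟨(m - (j + n)).toNat, by rw [hN _ (by omega)]; omega⟩
          rw [if_pos hmem, smul_zero]
      · exfalso
        apply hj
        rw [psiStar_single, if_neg hjr, map_zero]
    exact Set.Finite.subset (Set.Finite.image _ (Set.finite_Iio _)) hsub
  · refine ⟨Finsupp.lsum ℂ (fun w => LinearMap.toSpanSingleton ℂ Fock
      (∑ᶠ j : ℤ, psi (j + n) (psiStar j (Finsupp.single w 1)))), fun w => ?_, ?_⟩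
    · rw [Finsupp.lsum_single, LinearMap.toSpanSingleton_apply, one_smul]
    · intro Q hQ
      apply Finsupp.lhom_ext
      intro a b
      have h1 : (Finsupp.single a b : Fock) = b • Finsupp.single a 1 := by
        rw [Finsupp.smul_single, smul_eq_mul, mul_one]
      rw [h1, map_smul, map_smul, hQ a, Finsupp.lsum_single,
        LinearMap.toSpanSingleton_apply, one_smul]
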